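/- More generally, for any commutative ring $R$ and any nilpotent element $s \in R$, the operation $a \circ b := (a+b)(1 + s\,ab)^{-1}$ makes $R$ into an abelian group with identity $0$ and inverse $a \mapsto -a$. -/

import Mathlib

/-- For any commutative ring `R` and any nilpotent element `s ∈ R`, the operation
`a ∘ b := (a + b) * (1 + s * a * b)⁻¹` makes `R` into an abelian group with identity `0`
and inverse `a ↦ -a`. -/
theorem nilpotent_tangent_addition_abelian_group
    (R : Type*) [CommRing R] (s : R) (hs : IsNilpotent s)
    (op : R → R → R) (hop : ∀ a b : R, op a b = (a + b) * Ring.inverse (1 + s * a * b)) :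
    (∀ a b : R, op a b = op b a) ∧
    (∀ a b c : R, op (op a b) c = op a (op b c)) ∧
    (∀ a : R, op a 0 = a) ∧ (∀ a : R, op 0 a = a) ∧
    (∀ a : R, op a (-a) = 0) := by
  have hu : ∀ x : R, IsUnit (1 + s * x) := fun x =>
    (Commute.isNilpotent_mul_right (Commute.all s x) hs).isUnit_one_add
  have hinvE : ∀ x y : R, y = 1 + s * x → y * Ring.inverse y = 1 := fun x y h =>
    Ring.mul_inverse_cancel _ (h ▸ hu x)
  have hiiE : ∀ x y : R, y = 1 + s * x → Ring.inverse (Ring.inverse y) = y := by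
    intro x y h
    obtain ⟨u, hux⟩ := h ▸ hu x
    rw [← hux, Ring.inverse_unit, Ring.inverse_unit, inv_inv]
  have hcomm : ∀ a b : R, op a b = op b a := by
    intro a b
    rw [hop, hop]
    ring_nf
  have key : ∀ a b c : R, op (op a b) c
      = (a + b + c + s * a * b * c) * Ring.inverse (1 + s*a*b + s*a*c + s*b*c) := by
    intro a b c
    have hI := hinvE (a*b) (1 + s*a*b) (by ring)
    have h1 : 1 + s * (op a b) * c
        = (1 + s*a*b + s*a*c + s*b*c) * Ring.inverse (1 + s * a * b) := by
      rw [hop]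
      linear_combination -hI
    rw [hop (op a b) c, h1, Ring.mul_inverse_rev,
      hiiE (a*b) (1 + s*a*b) (by ring), hop]
    linear_combination ((a+b) * Ring.inverse (1 + s*a*b + s*a*c + s*b*c)) * hI
  refine ⟨hcomm, ?_, ?_, ?_, ?_⟩
  · intro a b c
    rw [hcomm a (op b c), key a b c, key b c a]
    ring_nf
  · intro a
    simp [hop]
  · intro a
    simp [hop]
  · intro a
    simp [hop]
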